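/- No embedding of ℤ² into the topological full group of a full shift Σ^ℤ is move-A-ithful, for any nontrivial finite abelian group A. That is, if G ≅ ℤ² is a subgroup of ⟦Σ^ℤ⟧ with cocycles c_g, then there exists β : G → A with finite nonempty support such that for all x ∈ Σ^ℤ and all γ : ℤ → End(A), Σ_{g ∈ G} γ(c_g(x))(β(g)) = 0. -/

import Mathlib

/-- The shift map `σ^n`: `(shiftZ n x) i = x (i + n)`; `shiftZ 1` is the left shift `σ`. -/
def shiftZ {A : Type*} (n : ℤ) (x : ℤ → A) : ℤ → A := fun i => x (i + n)

/-- An action of a group `G` by elements of the topological full group of the full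
shift `A^ℤ`, given together with the continuous cocycles `c g`. -/
structure FullShiftTFGAction (A : Type*) [TopologicalSpace A] (G : Type*) [Group G] where
  f : G → ((ℤ → A) ≃ₜ (ℤ → A))
  c : G → (ℤ → A) → ℤ
  cont : ∀ g, Continuous (c g)
  spec : ∀ g x, f g x = shiftZ (c g x) x
  map_mul : ∀ g h x, f (g * h) x = f g (f h x)

namespace Z2Aux

variable {A : Type*}

lemma shiftZ_zero (x : ℤ → A) : shiftZ 0 x = x := funext fun i => congrArg x (by ring)

lemma shiftZ_shiftZ (m n : ℤ) (x : ℤ → A) : shiftZ m (shiftZ n x) = shiftZ (m + n) x :=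
  funext fun i => congrArg x (by show i + m + n = i + (m + n); ring)

/-- A point is aperiodic if it has no nonzero period. -/
def Aper (x : ℤ → A) : Prop := ∀ p : ℤ, shiftZ p x = x → p = 0

lemma Aper.shift {x : ℤ → A} (hx : Aper x) (n : ℤ) : Aper (shiftZ n x) := by
  intro p hp
  rw [shiftZ_shiftZ] at hp
  have h2 := congrArg (shiftZ (-n)) hp
  rw [shiftZ_shiftZ, shiftZ_shiftZ] at h2
  have e1 : -n + (p + n) = p := by ring
  have e2 : -n + n = 0 := by ring
  rw [e1, e2, shiftZ_zero] at h2
  exact hx p h2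

lemma Aper.shift_inj {x : ℤ → A} (hx : Aper x) {s t : ℤ} (h : shiftZ s x = shiftZ t x) :
    s = t := by
  have h2 := congrArg (shiftZ (-t)) h
  rw [shiftZ_shiftZ, shiftZ_shiftZ] at h2
  have e2 : -t + t = 0 := by ring
  rw [e2, shiftZ_zero] at h2
  have := hx _ h2
  omega

/-- Auxiliary sequence of positions with strictly growing gaps. -/
def tseq (N : ℕ) : ℕ → ℤ
  | 0 => (N : ℤ) + 1
  | j + 1 => tseq N j + (j + 1)

lemma tseq_gt (N : ℕ) : ∀ j, (N : ℤ) < tseq N j := by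
  intro j; induction j with
  | zero => simp [tseq]
  | succ j ih => show (N:ℤ) < tseq N j + (j+1); omega

lemma tseq_strictMono (N : ℕ) : StrictMono (tseq N) := by
  apply strictMono_nat_of_lt_succ
  intro j
  show tseq N j < tseq N j + (j + 1)
  have : (0:ℤ) ≤ (j:ℤ) := Int.ofNat_nonneg j
  omega

lemma exists_aper_agree {a b : A} (hab : a ≠ b) (x : ℤ → A) (N : ℕ) :
    ∃ y : ℤ → A, Aper y ∧ ∀ i : ℤ, |i| ≤ (N : ℤ) → y i = x i := by
  classical
  set y : ℤ → A := fun i =>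
    if |i| ≤ (N : ℤ) then x i else (if ∃ j : ℕ, tseq N j = i then b else a) with hy
  have hyW : ∀ i : ℤ, |i| ≤ (N:ℤ) → y i = x i := fun i hi => by simp [hy, hi]
  have hyB : ∀ i : ℤ, (N:ℤ) < i → (y i = b ↔ ∃ j : ℕ, tseq N j = i) := by
    intro i hi
    have hni : ¬ (|i| ≤ (N:ℤ)) := by rw [abs_le]; omega
    simp only [hy, hni, if_false]
    constructor
    · intro h; by_contra hc; simp [hc] at h; exact hab h
    · intro h; simp [h]
  refine ⟨y, ?_, hyW⟩
  have key : ∀ q : ℤ, 0 < q → shiftZ q y = y → False := by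
    intro q hq heq
    have hper : ∀ i : ℤ, y (i + q) = y i := fun i => congrFun heq i
    set j : ℕ := q.toNat with hj
    have hjq : (j : ℤ) = q := Int.toNat_of_nonneg hq.le
    have h1 : y (tseq N j) = b := (hyB _ (tseq_gt N j)).2 ⟨j, rfl⟩
    have h2 : y (tseq N j + q) = b := by rw [hper, h1]
    have h3 : (N:ℤ) < tseq N j + q := by have := tseq_gt N j; omega
    obtain ⟨j', hj'⟩ := (hyB _ h3).1 h2
    have hlt1 : tseq N j < tseq N j' := by omega
    have hlt2 : tseq N j' < tseq N (j+1) := by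
      have hstep : tseq N (j+1) = tseq N j + (j+1) := rfl
      omega
    have := (tseq_strictMono N).lt_iff_lt.mp hlt1
    have := (tseq_strictMono N).lt_iff_lt.mp hlt2
    omega
  intro p hp
  by_contra hp0
  rcases lt_or_gt_of_ne hp0 with hneg | hpos
  · have h2 := congrArg (shiftZ (-p)) hp
    rw [shiftZ_shiftZ] at h2
    have e : -p + p = 0 := by ring
    rw [e, shiftZ_zero] at h2
    exact key (-p) (by omega) h2.symm
  · exact key p hpos hp


lemma locality [TopologicalSpace A] [DiscreteTopology A]
    (u : (ℤ → A) → ℤ) (hu : Continuous u) (x : ℤ → A) :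
    ∃ N : ℕ, ∀ y, (∀ i : ℤ, |i| ≤ (N:ℤ) → y i = x i) → u y = u x := by
  have ho : IsOpen (u ⁻¹' {u x}) := (isOpen_discrete _).preimage hu
  rw [isOpen_pi_iff] at ho
  obtain ⟨I, us, h1, h2⟩ := ho x rfl
  refine ⟨I.sup (fun i => i.natAbs), fun y hy => ?_⟩
  have hmem : y ∈ (↑I : Set ℤ).pi us := by
    intro i hi
    have hiI : i ∈ I := hi
    have hle : i.natAbs ≤ I.sup (fun i => i.natAbs) :=
      Finset.le_sup (f := fun i => i.natAbs) hiI
    have : y i = x i := by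
      apply hy
      rw [Int.abs_eq_natAbs]
      exact_mod_cast hle
    rw [this]
    exact (h1 i hiI).2
  exact h2 hmem

section TFG

variable [TopologicalSpace A] [DiscreteTopology A]
variable {G : Type*} [CommGroup G] (T : FullShiftTFGAction A G)
variable (hA : ∃ a b : A, a ≠ b)
include hA

lemma ext_aper (u v : (ℤ → A) → ℤ) (hu : Continuous u) (hv : Continuous v)
    (h : ∀ z, Aper z → u z = v z) (x : ℤ → A) : u x = v x := by
  obtain ⟨a, b, hab⟩ := hA
  obtain ⟨N₁, h₁⟩ := locality u hu x
  obtain ⟨N₂, h₂⟩ := locality v hv x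
  obtain ⟨y, hy, hagree⟩ := exists_aper_agree hab x (max N₁ N₂)
  have e1 : u y = u x := h₁ y (fun i hi => hagree i (le_trans hi (by push_cast; omega)))
  have e2 : v y = v x := h₂ y (fun i hi => hagree i (le_trans hi (by push_cast; omega)))
  rw [← e1, h y hy, e2]

omit hA in
lemma f_one (x : ℤ → A) : T.f 1 x = x := by
  have h := T.map_mul 1 1 x
  rw [one_mul] at h
  exact ((T.f 1).injective h.symm)

lemma c_one (x : ℤ → A) : T.c 1 x = 0 := by
  refine ext_aper hA (T.c 1) (fun _ => 0) (T.cont 1) continuous_const (fun z hz => ?_) x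
  exact hz _ ((T.spec 1 z).symm.trans (f_one T z))

lemma cocycle (g h : G) (x : ℤ → A) : T.c (g * h) x = T.c g (T.f h x) + T.c h x := by
  refine ext_aper hA (T.c (g*h)) (fun z => T.c g (T.f h z) + T.c h z)
    (T.cont _) (((T.cont g).comp (T.f h).continuous).add (T.cont h)) (fun z hz => ?_) x
  have e : shiftZ (T.c (g*h) z) z = shiftZ (T.c g (T.f h z) + T.c h z) z := by
    rw [← T.spec, T.map_mul, T.spec g, T.spec h, shiftZ_shiftZ]
  exact hz.shift_inj e

omit hA in
lemma f_inv_f (g : G) (x : ℤ → A) : T.f g⁻¹ (T.f g x) = x := by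
  rw [← T.map_mul, inv_mul_cancel, f_one]

omit hA in
lemma c_zero_fix {g : G} {x : ℤ → A} (h : T.c g x = 0) : T.f g x = x := by
  rw [T.spec, h, shiftZ_zero]

lemma c_zero_invariant (k w : G) (x : ℤ → A) (h : T.c k x = 0) :
    T.c k (T.f w x) = 0 := by
  obtain ⟨a, b, hab⟩ := hA
  obtain ⟨N₁, h₁⟩ := locality (fun z => T.c k (T.f w z)) ((T.cont k).comp (T.f w).continuous) x
  obtain ⟨N₂, h₂⟩ := locality (T.c k) (T.cont k) x
  obtain ⟨y, hy, hagree⟩ := exists_aper_agree hab x (max N₁ N₂)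
  have e1 : T.c k (T.f w y) = T.c k (T.f w x) :=
    h₁ y (fun i hi => hagree i (le_trans hi (by push_cast; omega)))
  have e2 : T.c k y = 0 := by
    rw [h₂ y (fun i hi => hagree i (le_trans hi (by push_cast; omega)))]; exact h
  have hfix : T.f k y = y := c_zero_fix T e2
  have hcomm : T.f k (T.f w y) = T.f w y := by
    rw [← T.map_mul, mul_comm, T.map_mul, hfix]
  have haper : Aper (T.f w y) := by
    rw [T.spec]; exact hy.shift _
  have : T.c k (T.f w y) = 0 := haper _ ((T.spec k _).symm.trans hcomm)
  rw [← e1, this]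


omit hA in
lemma exists_bound [Fintype A] (g : G) : ∃ K : ℕ, ∀ x, (T.c g x).natAbs ≤ K := by
  have h1 : (Set.range (T.c g)).Finite := (isCompact_range (T.cont g)).finite DiscreteTopology.isDiscrete
  have h2 : (Set.range fun x => (T.c g x).natAbs).Finite := by
    have := h1.image Int.natAbs
    rwa [← Set.range_comp] at this
  obtain ⟨K, hK⟩ := h2.bddAbove
  exact ⟨K, fun x => hK (Set.mem_range_self x)⟩

lemma pow_bound (s : G) (K : ℕ) (hK : ∀ x, (T.c s x).natAbs ≤ K) :
    ∀ (n : ℕ) (x : ℤ → A), (T.c (s ^ n) x).natAbs ≤ n * K := by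
  intro n
  induction n with
  | zero => intro x; simp [c_one T hA x]
  | succ n ih =>
    intro x
    rw [pow_succ, cocycle T hA]
    refine le_trans (Int.natAbs_add_le _ _) ?_
    have := ih (T.f s x)
    have := hK x
    calc (T.c (s ^ n) (T.f s x)).natAbs + (T.c s x).natAbs ≤ n * K + K := by omega
    _ = (n + 1) * K := by ring

lemma zpow_bound (s : G) (K : ℕ) (hK : ∀ x, (T.c s x).natAbs ≤ K)
    (hK' : ∀ x, (T.c s⁻¹ x).natAbs ≤ K) :
    ∀ (z : ℤ) (x : ℤ → A), (T.c (s ^ z) x).natAbs ≤ z.natAbs * K := by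
  intro z x
  rcases le_or_gt 0 z with hz | hz
  · lift z to ℕ using hz
    rw [zpow_natCast]
    simpa using pow_bound T hA s K hK z x
  · have hzn : ((-z).toNat : ℤ) = -z := Int.toNat_of_nonneg (by omega)
    have hrw : s ^ z = (s⁻¹) ^ ((-z).toNat) := by
      rw [inv_pow, ← zpow_natCast, hzn, ← zpow_neg, neg_neg]
    rw [hrw]
    have := pow_bound T hA s⁻¹ K hK' ((-z).toNat) x
    have hza : z.natAbs = (-z).toNat := by omega
    rw [hza]
    exact this


end TFG

open Multiplicative in
lemma ofAdd_split (v : ℤ × ℤ) :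
    (ofAdd v : Multiplicative (ℤ×ℤ)) = ofAdd ((1,0) : ℤ×ℤ) ^ v.1 * ofAdd ((0,1) : ℤ×ℤ) ^ v.2 := by
  rw [← ofAdd_zsmul, ← ofAdd_zsmul, ← ofAdd_add]
  congr 1
  ext <;> simp

section Z2

variable [TopologicalSpace A] [DiscreteTopology A] [Fintype A]
variable (T : FullShiftTFGAction A (Multiplicative (ℤ × ℤ)))
variable (hA : ∃ a b : A, a ≠ b)
include hA

open Multiplicative

lemma exists_uniform :
    ∃ R : ℕ, ∀ x : ℤ → A, ∃ v : ℤ × ℤ, v ≠ 0 ∧ v.1.natAbs ≤ R ∧ v.2.natAbs ≤ R ∧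
      T.c (ofAdd v) x = 0 := by
  classical
  obtain ⟨K1, hK1⟩ := exists_bound T (ofAdd ((1,0) : ℤ×ℤ))
  obtain ⟨K2, hK2⟩ := exists_bound T (ofAdd ((1,0) : ℤ×ℤ))⁻¹
  obtain ⟨K3, hK3⟩ := exists_bound T (ofAdd ((0,1) : ℤ×ℤ))
  obtain ⟨K4, hK4⟩ := exists_bound T (ofAdd ((0,1) : ℤ×ℤ))⁻¹
  set K : ℕ := K1 + K2 + K3 + K4 + 1 with hK
  have hza : ∀ (z : ℤ) (x : ℤ → A), (T.c ((ofAdd ((1,0):ℤ×ℤ)) ^ z) x).natAbs ≤ z.natAbs * K :=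
    zpow_bound T hA _ K (fun x => by have := hK1 x; omega) (fun x => by have := hK2 x; omega)
  have hzb : ∀ (z : ℤ) (x : ℤ → A), (T.c ((ofAdd ((0,1):ℤ×ℤ)) ^ z) x).natAbs ≤ z.natAbs * K :=
    zpow_bound T hA _ K (fun x => by have := hK3 x; omega) (fun x => by have := hK4 x; omega)
  have hvec : ∀ (v : ℤ×ℤ) (x : ℤ → A),
      (T.c (ofAdd v) x).natAbs ≤ (v.1.natAbs + v.2.natAbs) * K := by
    intro v x
    rw [ofAdd_split, cocycle T hA]
    refine le_trans (Int.natAbs_add_le _ _) ?_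
    have h1 := hza v.1 (T.f (ofAdd ((0,1):ℤ×ℤ) ^ v.2) x)
    have h2 := hzb v.2 x
    calc (T.c (ofAdd ((1,0):ℤ×ℤ) ^ v.1) (T.f (ofAdd ((0,1):ℤ×ℤ) ^ v.2) x)).natAbs
          + (T.c (ofAdd ((0,1):ℤ×ℤ) ^ v.2) x).natAbs
        ≤ v.1.natAbs * K + v.2.natAbs * K := Nat.add_le_add h1 h2
      _ = (v.1.natAbs + v.2.natAbs) * K := by ring
  set r : ℕ := K + 1 with hr
  set R : ℤ := (r : ℤ) with hR
  set L : ℕ := 2 * r * K with hL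
  refine ⟨2 * r, fun x => ?_⟩
  set D : Finset (ℤ × ℤ) := Finset.Icc (-R) R ×ˢ Finset.Icc (-R) R with hD
  set tgt : Finset ℤ := Finset.Icc (-(L:ℤ)) (L:ℤ) with htgt
  have hmaps : ∀ v ∈ D, T.c (ofAdd v) x ∈ tgt := by
    intro v hv
    rw [hD, Finset.mem_product, Finset.mem_Icc, Finset.mem_Icc] at hv
    have hb1 : v.1.natAbs ≤ r := by omega
    have hb2 : v.2.natAbs ≤ r := by omega
    have := hvec v x
    have hle : (v.1.natAbs + v.2.natAbs) * K ≤ L := by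
      rw [hL]; exact Nat.mul_le_mul_right K (by omega)
    rw [htgt, Finset.mem_Icc]
    omega
  have hcardD : D.card = (2 * r + 1) * (2 * r + 1) := by
    rw [hD, Finset.card_product, Int.card_Icc]
    have : (R + 1 - -R).toNat = 2 * r + 1 := by rw [hR]; omega
    rw [this]
  have hcardT : tgt.card = 2 * L + 1 := by
    rw [htgt, Int.card_Icc]
    omega
  have hlt : tgt.card < D.card := by
    rw [hcardD, hcardT, hL, hr]
    nlinarith
  obtain ⟨p, hp, q, hq, hpq, heq⟩ :=
    Finset.exists_ne_map_eq_of_card_lt_of_maps_to hlt hmaps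
  refine ⟨p - q, sub_ne_zero.mpr hpq, ?_, ?_, ?_⟩
  · rw [hD, Finset.mem_product, Finset.mem_Icc, Finset.mem_Icc] at hp hq
    have : (p - q).1 = p.1 - q.1 := rfl
    omega
  · rw [hD, Finset.mem_product, Finset.mem_Icc, Finset.mem_Icc] at hp hq
    have : (p - q).2 = p.2 - q.2 := rfl
    omega
  · have h1 : (ofAdd (p - q) : Multiplicative (ℤ×ℤ)) * ofAdd q = ofAdd p := by
      rw [← ofAdd_add, sub_add_cancel]
    have h2 := cocycle T hA (ofAdd (p - q)) (ofAdd q) x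
    rw [h1, heq] at h2
    have hz : T.c (ofAdd (p - q)) (T.f (ofAdd q) x) = 0 := by omega
    have h3 := c_zero_invariant T hA (ofAdd (p - q)) (ofAdd q)⁻¹ _ hz
    rwa [f_inv_f] at h3


end Z2
end Z2Aux

open Z2Aux Multiplicative in
/-- No embedding of `ℤ²` into the topological full group of a full shift is
move-`M`-ithful for a nontrivial finite abelian group `M`: there is a finitely and
nontrivially supported `β : ℤ² → M` such that for every point `x` and every
`γ : ℤ → End(M)` the sum `Σ_g γ(c_g(x))(β(g))` vanishes. -/
theorem Z2_not_moveAithful {A M : Type*} [Fintype A] [TopologicalSpace A]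
    [DiscreteTopology A] (hcard : 2 ≤ Fintype.card A)
    [AddCommGroup M] [Fintype M] [Nontrivial M]
    (T : FullShiftTFGAction A (Multiplicative (ℤ × ℤ)))
    (hfaith : Function.Injective T.f) :
    ∃ β : Multiplicative (ℤ × ℤ) → M,
      (Function.support β).Finite ∧ (Function.support β).Nonempty ∧
      ∀ (x : ℤ → A) (γ : ℤ → (M →+ M)), (∑ᶠ g : Multiplicative (ℤ × ℤ), γ (T.c g x) (β g)) = 0 := by
  classical
  have hntA : Nontrivial A := Fintype.one_lt_card_iff_nontrivial.mp (by omega)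
  obtain ⟨a0, b0, hab⟩ := exists_pair_ne A
  have hA : ∃ a b : A, a ≠ b := ⟨a0, b0, hab⟩
  obtain ⟨R, hR⟩ := exists_uniform T hA
  set V : Finset (ℤ × ℤ) := (Finset.Icc (-(R:ℤ)) R ×ˢ Finset.Icc (-(R:ℤ)) R).erase 0 with hV
  have hVz : ∀ x : ℤ → A, ∃ v ∈ V, T.c (ofAdd v) x = 0 := by
    intro x
    obtain ⟨v, hv0, h1, h2, h3⟩ := hR x
    refine ⟨v, ?_, h3⟩
    rw [hV, Finset.mem_erase]
    refine ⟨hv0, ?_⟩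
    rw [Finset.mem_product, Finset.mem_Icc, Finset.mem_Icc]
    omega
  have hVne0 : ∀ v ∈ V, v ≠ (0 : ℤ×ℤ) := fun v hv => (Finset.mem_erase.mp (hV ▸ hv)).1
  -- a prime-order element of M
  have hcard1 : Fintype.card M ≠ 1 := Nat.ne_of_gt Fintype.one_lt_card
  obtain ⟨q, hq, hdvd⟩ := Nat.exists_prime_and_dvd hcard1
  haveI : Fact q.Prime := ⟨hq⟩
  obtain ⟨m₀, hm₀⟩ := exists_prime_addOrderOf_dvd_card q hdvd
  set φ : ZMod q →+ M := ZMod.lift q ⟨zmultiplesHom M m₀, by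
      rw [zmultiplesHom_apply, natCast_zsmul, ← hm₀]
      exact addOrderOf_nsmul_eq_zero m₀⟩ with hφdef
  have hφnat : ∀ n : ℕ, φ ((n : ℤ) : ZMod q) = n • m₀ := by
    intro n
    rw [hφdef, ZMod.lift_coe, zmultiplesHom_apply, natCast_zsmul]
  have hφval : ∀ a : ZMod q, φ a = a.val • m₀ := by
    intro a
    have e : ((a.val : ℤ) : ZMod q) = a := by
      rw [Int.cast_natCast]
      exact ZMod.natCast_rightInverse a
    conv_lhs => rw [← e]
    exact hφnat a.val
  have hφne : ∀ a : ZMod q, a ≠ 0 → φ a ≠ 0 := by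
    intro a ha h0
    rw [hφval] at h0
    have hdvd2 := addOrderOf_dvd_of_nsmul_eq_zero h0
    rw [hm₀] at hdvd2
    have h1 : a.val ≠ 0 := fun h => ha ((ZMod.val_eq_zero a).mp h)
    have h2 : a.val < q := ZMod.val_lt a
    have := Nat.le_of_dvd (Nat.pos_of_ne_zero h1) hdvd2
    omega
  set P : AddMonoidAlgebra (ZMod q) (ℤ×ℤ) :=
    ∏ v ∈ V, (AddMonoidAlgebra.single (0 : ℤ×ℤ) (1 : ZMod q) - AddMonoidAlgebra.single v 1)
    with hPdef
  have hP : P ≠ 0 := by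
    rw [hPdef, Finset.prod_ne_zero_iff]
    intro v hv h0
    have h1 : (AddMonoidAlgebra.single (0:ℤ×ℤ) (1:ZMod q) - AddMonoidAlgebra.single v 1
        : AddMonoidAlgebra (ZMod q) (ℤ×ℤ)).coeff (0:ℤ×ℤ)
        = (AddMonoidAlgebra.single (0:ℤ×ℤ) (1:ZMod q)).coeff (0:ℤ×ℤ)
          - (AddMonoidAlgebra.single v (1:ZMod q)).coeff (0:ℤ×ℤ) := by
        rw [AddMonoidAlgebra.coeff_sub, Finsupp.sub_apply]
    rw [h0] at h1
    have h2 : (AddMonoidAlgebra.single v (1:ZMod q)).coeff (0:ℤ×ℤ) = 0 := by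
      rw [AddMonoidAlgebra.coeff_single, Finsupp.single_apply]
      simp [hVne0 v hv]
    have h3 : ((0 : AddMonoidAlgebra (ZMod q) (ℤ×ℤ))).coeff (0:ℤ×ℤ) = 0 := rfl
    rw [h2, h3, AddMonoidAlgebra.coeff_single, Finsupp.single_eq_same] at h1
    simp at h1
  set β : Multiplicative (ℤ×ℤ) → M := fun g => φ (P.coeff g.toAdd) with hβdef
  refine ⟨β, ?_, ?_, ?_⟩
  · -- finite support
    have hsub : Function.support β ⊆ (fun g : Multiplicative (ℤ×ℤ) => g.toAdd) ⁻¹' ↑P.coeff.support := by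
      intro g hg
      simp only [Function.mem_support, hβdef] at hg
      simp only [Set.mem_preimage, Finset.mem_coe, Finsupp.mem_support_iff]
      intro h0
      exact hg (by rw [h0]; exact map_zero φ)
    exact ((P.coeff.support.finite_toSet).preimage (Multiplicative.toAdd.injective.injOn)).subset hsub
  · -- nonempty support
    obtain ⟨w, hw⟩ := Finsupp.support_nonempty_iff.mpr (AddMonoidAlgebra.coeff_eq_zero.not.mpr hP)
    refine ⟨ofAdd w, ?_⟩
    rw [Function.mem_support]
    have e : β (ofAdd w) = φ (P.coeff w) := by simp only [hβdef, toAdd_ofAdd]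
    rw [e]
    exact hφne _ (Finsupp.mem_support_iff.mp hw)
  · intro x γ
    obtain ⟨v, hvV, hcv⟩ := hVz x
    have hfk : T.f (ofAdd v) x = x := c_zero_fix T hcv
    have hck : ∀ g : Multiplicative (ℤ×ℤ), T.c (g * ofAdd v) x = T.c g x := by
      intro g
      rw [cocycle T hA, hfk, hcv, add_zero]
    set Q : AddMonoidAlgebra (ZMod q) (ℤ×ℤ) :=
      ∏ u ∈ V.erase v, (AddMonoidAlgebra.single (0:ℤ×ℤ) (1:ZMod q) - AddMonoidAlgebra.single u 1)
      with hQdef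
    have hPQ : P = (AddMonoidAlgebra.single (0:ℤ×ℤ) (1:ZMod q) - AddMonoidAlgebra.single v 1) * Q := by
      rw [hPdef, hQdef]
      exact (Finset.mul_prod_erase V _ hvV).symm
    have hcoef : ∀ w : ℤ×ℤ, P.coeff w = Q.coeff w - Q.coeff (w - v) := by
      intro w
      have h2 : P.coeff w = ((AddMonoidAlgebra.single (0:ℤ×ℤ) (1:ZMod q)) * Q).coeff w
          - ((AddMonoidAlgebra.single v (1:ZMod q)) * Q).coeff w := by
        rw [hPQ, sub_mul]
        rw [AddMonoidAlgebra.coeff_sub, Finsupp.sub_apply]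
      rw [h2, AddMonoidAlgebra.coeff_single_mul_apply, AddMonoidAlgebra.coeff_single_mul_apply]
      simp [neg_add_eq_sub]
    set B : Multiplicative (ℤ×ℤ) → M := fun g => φ (Q.coeff g.toAdd) with hBdef
    have hβB : ∀ g : Multiplicative (ℤ×ℤ), β g = B g - B (g * (ofAdd v)⁻¹) := by
      intro g
      have htoAdd : (g * (ofAdd v)⁻¹).toAdd = g.toAdd - v := by
        simp [sub_eq_add_neg]
      simp only [hβdef, hBdef, htoAdd]
      rw [hcoef, map_sub]
    have hBfin : (Function.support B).Finite := by
      refine ((Q.coeff.support.finite_toSet).preimage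
        (Multiplicative.toAdd.injective.injOn)).subset ?_
      intro g hg
      simp only [Function.mem_support, hBdef] at hg
      simp only [Set.mem_preimage, Finset.mem_coe, Finsupp.mem_support_iff]
      intro h0
      exact hg (by rw [h0]; exact map_zero φ)
    have hufin : (Function.support (fun g => γ (T.c g x) (B g))).Finite := by
      refine hBfin.subset ?_
      intro g hg
      simp only [Function.mem_support] at hg ⊢
      intro h0
      exact hg (by rw [h0, map_zero])
    have hwfin : (Function.support (fun g => γ (T.c g x) (B (g * (ofAdd v)⁻¹)))).Finite := by
      refine ((hBfin.preimage ((Equiv.mulRight ((ofAdd v : Multiplicative (ℤ×ℤ)))⁻¹).injective.injOn)).subset ?_)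
      intro g hg
      simp only [Function.mem_support] at hg
      simp only [Set.mem_preimage, Function.mem_support, Equiv.coe_mulRight]
      intro h0
      exact hg (by rw [h0, map_zero])
    have hsplit : ∀ g : Multiplicative (ℤ×ℤ),
        γ (T.c g x) (β g) = γ (T.c g x) (B g) - γ (T.c g x) (B (g * (ofAdd v)⁻¹)) := by
      intro g
      rw [hβB g, map_sub]
    rw [finsum_congr hsplit, finsum_sub_distrib hufin hwfin]
    have hre : (∑ᶠ g : Multiplicative (ℤ×ℤ), γ (T.c g x) (B (g * (ofAdd v)⁻¹)))
        = ∑ᶠ g : Multiplicative (ℤ×ℤ), γ (T.c g x) (B g) := by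
      have h1 := finsum_comp_equiv (Equiv.mulRight ((ofAdd v : Multiplicative (ℤ×ℤ))))
        (f := fun g => γ (T.c g x) (B (g * (ofAdd v)⁻¹)))
      rw [← h1]
      apply finsum_congr
      intro g
      simp only [Equiv.coe_mulRight]
      rw [mul_inv_cancel_right, hck g]
    rw [hre, sub_self]
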